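/- Let p₀,…,p_{n−1} (n ≥ 2) be an orthogonal path on the unit sphere in ℝ³ whose first point p₀ is a coordinate point and whose second point p₁ is also a coordinate point (so the first arc is a coordinate arc). Then the last point p_{n−1} is also a coordinate point. -/
import Mathlib


open scoped RealInnerProductSpace

/-- A coordinate point on the unit sphere: one of the six unit vectors
`±e₀, ±e₁, ±e₂`, where `e j = EuclideanSpace.single j 1`. -/
def IsCoordPoint (x : EuclideanSpace ℝ (Fin 3)) : Prop :=
  ∃ j : Fin 3, x = EuclideanSpace.single j (1 : ℝ) ∨ x = -EuclideanSpace.single j (1 : ℝ)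

lemma coordPattern (x : EuclideanSpace ℝ (Fin 3)) (j : Fin 3)
    (hz : ∀ i, i ≠ j → x i = 0) (hv : x j = 1 ∨ x j = -1) : IsCoordPoint x := by
  refine ⟨j, ?_⟩
  rcases hv with h | h
  · left
    ext i
    by_cases hij : i = j
    · subst hij; simp [EuclideanSpace.single_apply, h]
    · simp [EuclideanSpace.single_apply, hz i hij, hij]
  · right
    ext i
    by_cases hij : i = j
    · subst hij; simp [EuclideanSpace.single_apply, h]
    · simp [EuclideanSpace.single_apply, hz i hij, hij]

lemma key (x : EuclideanSpace ℝ (Fin 3)) (hx : ‖x‖ = 1) (a b : Fin 3) (hab : a ≠ b)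
    (ha : x a = 0) (hb : x b = -1 ∨ x b = 0 ∨ x b = 1) : IsCoordPoint x := by
  have hsum : ∑ i, x i ^ 2 = 1 := by
    have h1 := hx
    rw [EuclideanSpace.norm_eq] at h1
    have hnn : (0:ℝ) ≤ ∑ i, ‖x i‖ ^ 2 := Finset.sum_nonneg fun i _ => sq_nonneg _
    have h2 : (∑ i, ‖x i‖ ^ 2) = 1 := by nlinarith [Real.sq_sqrt hnn]
    simpa [Real.norm_eq_abs, sq_abs] using h2
  have sq0 : ∀ t : ℝ, t ^ 2 = 0 → t = 0 := fun t ht =>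
    (pow_eq_zero_iff two_ne_zero).mp ht
  -- the two main cases
  have case1 : (x b = 1 ∨ x b = -1) → IsCoordPoint x := by
    intro hb1
    have hxb2 : x b ^ 2 = 1 := by rcases hb1 with h | h <;> rw [h] <;> ring
    have hrest : ∑ i ∈ Finset.univ.erase b, x i ^ 2 = 0 := by
      have h2 := Finset.sum_erase_eq_sub (s := Finset.univ) (f := fun i => x i ^ 2)
        (Finset.mem_univ b)
      simp only [] at h2
      rw [h2, hsum, hxb2]
      ring
    have hz : ∀ i, i ≠ b → x i = 0 := by
      intro i hi
      have := (Finset.sum_eq_zero_iff_of_nonneg (fun j _ => sq_nonneg (x j))).mp hrest i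
        (Finset.mem_erase.mpr ⟨hi, Finset.mem_univ i⟩)
      exact sq0 _ this
    exact coordPattern x b hz hb1
  rcases hb with h | h | h
  · exact case1 (Or.inr h)
  · -- x a = 0, x b = 0 : the third coordinate is ±1
    have tricho : ∀ a b : Fin 3, a ≠ b → ∃ c, c ≠ a ∧ c ≠ b ∧
        ∀ i : Fin 3, i = a ∨ i = b ∨ i = c := by decide
    obtain ⟨c, hca, hcb, hcov⟩ := tricho a b hab
    have hz : ∀ i, i ≠ c → x i = 0 := by
      intro i hi
      rcases hcov i with rfl | rfl | rfl
      · exact ha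
      · exact h
      · exact absurd rfl hi
    have hxc2 : x c ^ 2 = 1 := by
      have h2 := Finset.sum_erase_eq_sub (s := Finset.univ) (f := fun i => x i ^ 2)
        (Finset.mem_univ c)
      simp only [] at h2
      have hrest : ∑ i ∈ Finset.univ.erase c, x i ^ 2 = 0 :=
        Finset.sum_eq_zero fun i hi => by
          rw [hz i (Finset.mem_erase.mp hi).1]; ring
      rw [hrest, hsum] at h2
      linarith
    refine coordPattern x c hz ?_
    rcases mul_self_eq_one_iff.mp (by linear_combination hxc2) with h1 | h1
    · exact Or.inl h1
    · exact Or.inr h1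
  · exact case1 (Or.inl h)

lemma inner_coord_left {x : EuclideanSpace ℝ (Fin 3)} {j : Fin 3}
    (h : x = EuclideanSpace.single j (1:ℝ) ∨ x = -EuclideanSpace.single j (1:ℝ))
    (v : EuclideanSpace ℝ (Fin 3)) :
    ⟪x, v⟫ = v j ∨ ⟪x, v⟫ = -v j := by
  rcases h with h | h <;> rw [h] <;>
    simp [EuclideanSpace.inner_single_left, inner_neg_left]

/-- An orthogonal path `p 0, …, p (n-1)` on the unit sphere (an injective sequence of
unit vectors with consecutive points orthogonal and all interior angles rectilinear)
whose first point `p 0` is a coordinate point and whose second point `p 1` is also a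
coordinate point (so the first arc is a coordinate arc) must end at a coordinate
point `p (n-1)`. -/
theorem orthogonal_path_coord_endpoint
    (n : ℕ) (hn : 2 ≤ n) (p : ℕ → EuclideanSpace ℝ (Fin 3))
    (hunit : ∀ i < n, ‖p i‖ = 1)
    (hinj : ∀ i < n, ∀ j < n, p i = p j → i = j)
    (horth : ∀ i, i + 1 < n → ⟪p i, p (i + 1)⟫ = 0)
    (hrect : ∀ i, 0 < i → i + 1 < n →
      ⟪p (i - 1), p (i + 1)⟫ ∈ ({-1, 0, 1} : Set ℝ))
    (h0 : IsCoordPoint (p 0)) (h1 : IsCoordPoint (p 1)) :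
    IsCoordPoint (p (n - 1)) := by
  have main : ∀ k, k + 1 < n → IsCoordPoint (p k) ∧ IsCoordPoint (p (k + 1)) := by
    intro k
    induction k with
    | zero => intro _; exact ⟨h0, h1⟩
    | succ k ih =>
      intro hk
      obtain ⟨hpk, hpk1⟩ := ih (by omega)
      refine ⟨hpk1, ?_⟩
      obtain ⟨a, haeq⟩ := hpk1
      obtain ⟨b, hbeq⟩ := hpk
      have hab : a ≠ b := by
        intro hEq
        subst hEq
        have ho := horth k (by omega)
        have hval : p (k+1) a = 1 ∨ p (k+1) a = -1 := by
          rcases haeq with he | he <;> rw [he] <;>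
            simp [EuclideanSpace.single_apply]
        rcases inner_coord_left hbeq (p (k+1)) with hi | hi <;>
          rw [ho] at hi <;> rcases hval with hv | hv <;> rw [hv] at hi <;> norm_num at hi
      have ha0 : p (k + 2) a = 0 := by
        have ho := horth (k + 1) (by omega)
        rcases inner_coord_left haeq (p (k+2)) with hi | hi
        · rw [ho] at hi; exact hi.symm
        · rw [ho] at hi; linarith
      have hb3 : p (k + 2) b = -1 ∨ p (k + 2) b = 0 ∨ p (k + 2) b = 1 := by
        have hr := hrect (k + 1) (by omega) (by omega)
        simp only [Nat.add_sub_cancel] at hr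
        rcases inner_coord_left hbeq (p (k+2)) with hi | hi <;> rw [hi] at hr <;>
          rcases hr with h | h | h <;> simp only [Set.mem_singleton_iff] at * <;>
          first
            | (left; linarith)
            | (right; left; linarith)
            | (right; right; linarith)
      have := key (p (k + 2)) (hunit (k + 2) (by omega)) a b hab ha0 hb3
      simpa using this
  rcases Nat.lt_or_ge 2 n with h | h
  · have := (main (n - 2) (by omega)).2
    simpa [show n - 2 + 1 = n - 1 from by omega] using this
  · have hn2 : n = 2 := by omega
    subst hn2
    simpa using h1
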